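/- For every hypothesis h ∈ H, the target expected error satisfies ε_t(h) ≤ ε_s(h) + (1/2)·d_{HΔH}(P_s, P_t) + λ, where λ = inf_{h' ∈ H} (ε_s(h') + ε_t(h')). -/

import Mathlib

open MeasureTheory

lemma triangle_toReal {X : Type*} [MeasurableSpace X] (μ : Measure X)
    [IsProbabilityMeasure μ] {A B C : Set X} (hs : A ⊆ B ∪ C) :
    (μ A).toReal ≤ (μ B).toReal + (μ C).toReal := by
  have h1 : μ A ≤ μ B + μ C := (measure_mono hs).trans (measure_union_le _ _)
  have h2 := ENNReal.toReal_mono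
    (ENNReal.add_ne_top.mpr ⟨measure_ne_top _ _, measure_ne_top _ _⟩) h1
  rwa [ENNReal.toReal_add (measure_ne_top _ _) (measure_ne_top _ _)] at h2

lemma ne_subset_union {X : Type*} (a b c : X → Bool) :
    {x | a x ≠ b x} ⊆ {x | a x ≠ c x} ∪ {x | c x ≠ b x} := by
  intro x hx
  by_contra hcon
  simp only [Set.mem_union, Set.mem_setOf_eq] at hcon hx
  push_neg at hcon
  exact hx (hcon.1.trans hcon.2)

/-- Ben-David et al. bound: for every hypothesis `h ∈ H`, the target error is
bounded by the source error plus half the `HΔH`-distance plus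
`λ = inf_{h' ∈ H} (ε_s(h') + ε_t(h'))`. -/
theorem target_error_bound
    {X : Type*} [MeasurableSpace X]
    (Ps Pt : Measure X) [IsProbabilityMeasure Ps] [IsProbabilityMeasure Pt]
    (H : Set (X → Bool)) (hHne : H.Nonempty)
    (hHmeas : ∀ h ∈ H, Measurable h)
    (fs ft : X → Bool) (hfs : Measurable fs) (hft : Measurable ft)
    (h : X → Bool) (hh : h ∈ H) :
    (Pt {x | h x ≠ ft x}).toReal ≤
      (Ps {x | h x ≠ fs x}).toReal
      + (1 / 2) * (2 * ⨆ p : H × H,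
          |(Ps {x | (p.1 : X → Bool) x ≠ (p.2 : X → Bool) x}).toReal
            - (Pt {x | (p.1 : X → Bool) x ≠ (p.2 : X → Bool) x}).toReal|)
      + ⨅ h' : H, ((Ps {x | (h' : X → Bool) x ≠ fs x}).toReal
          + (Pt {x | (h' : X → Bool) x ≠ ft x}).toReal) := by
  haveI : Nonempty H := hHne.to_subtype
  set S := ⨆ p : H × H,
      |(Ps {x | (p.1 : X → Bool) x ≠ (p.2 : X → Bool) x}).toReal
        - (Pt {x | (p.1 : X → Bool) x ≠ (p.2 : X → Bool) x}).toReal| with hS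
  have hbdd : BddAbove (Set.range fun p : H × H =>
      |(Ps {x | (p.1 : X → Bool) x ≠ (p.2 : X → Bool) x}).toReal
        - (Pt {x | (p.1 : X → Bool) x ≠ (p.2 : X → Bool) x}).toReal|) := by
    refine ⟨2, ?_⟩
    rintro _ ⟨p, rfl⟩
    have h1 : (Ps {x | (p.1 : X → Bool) x ≠ (p.2 : X → Bool) x}).toReal ≤ 1 := by
      have := prob_le_one (μ := Ps) (s := {x | (p.1 : X → Bool) x ≠ (p.2 : X → Bool) x})
      simpa using ENNReal.toReal_mono ENNReal.one_ne_top this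
    have h2 : (Pt {x | (p.1 : X → Bool) x ≠ (p.2 : X → Bool) x}).toReal ≤ 1 := by
      have := prob_le_one (μ := Pt) (s := {x | (p.1 : X → Bool) x ≠ (p.2 : X → Bool) x})
      simpa using ENNReal.toReal_mono ENNReal.one_ne_top this
    have h3 : (0:ℝ) ≤ (Ps {x | (p.1 : X → Bool) x ≠ (p.2 : X → Bool) x}).toReal :=
      ENNReal.toReal_nonneg
    have h4 : (0:ℝ) ≤ (Pt {x | (p.1 : X → Bool) x ≠ (p.2 : X → Bool) x}).toReal :=
      ENNReal.toReal_nonneg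
    rw [abs_le]; constructor <;> linarith
  have key : ∀ h' : H, (Pt {x | h x ≠ ft x}).toReal ≤
      (Ps {x | h x ≠ fs x}).toReal + S
      + ((Ps {x | (h' : X → Bool) x ≠ fs x}).toReal
          + (Pt {x | (h' : X → Bool) x ≠ ft x}).toReal) := by
    intro h'
    have e1 : (Pt {x | h x ≠ ft x}).toReal ≤
        (Pt {x | h x ≠ (h' : X → Bool) x}).toReal
        + (Pt {x | (h' : X → Bool) x ≠ ft x}).toReal :=
      triangle_toReal Pt (ne_subset_union h ft (h' : X → Bool))
    have e2 : (Ps {x | h x ≠ (h' : X → Bool) x}).toReal ≤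
        (Ps {x | h x ≠ fs x}).toReal
        + (Ps {x | (h' : X → Bool) x ≠ fs x}).toReal := by
      have := triangle_toReal Ps (ne_subset_union h (h' : X → Bool) fs)
      have heq : {x | fs x ≠ (h' : X → Bool) x} = {x | (h' : X → Bool) x ≠ fs x} := by
        ext x; exact ne_comm
      rwa [heq] at this
    have e3 : |(Ps {x | h x ≠ (h' : X → Bool) x}).toReal
        - (Pt {x | h x ≠ (h' : X → Bool) x}).toReal| ≤ S := by
      have := le_ciSup hbdd (⟨⟨h, hh⟩, h'⟩ : H × H)
      simpa using this
    have e4 : (Pt {x | h x ≠ (h' : X → Bool) x}).toReal ≤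
        (Ps {x | h x ≠ (h' : X → Bool) x}).toReal + S := by
      have := abs_le.mp e3
      linarith [this.1]
    linarith
  have hinf : (Pt {x | h x ≠ ft x}).toReal - (Ps {x | h x ≠ fs x}).toReal - S ≤
      ⨅ h' : H, ((Ps {x | (h' : X → Bool) x ≠ fs x}).toReal
          + (Pt {x | (h' : X → Bool) x ≠ ft x}).toReal) := by
    apply le_ciInf
    intro h'
    linarith [key h']
  have h12 : (1 / 2 : ℝ) * (2 * S) = S := by ring
  rw [h12]
  linarith
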